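/- Explicit five-dimensional counterexample. On ℝ⁵ with the Euclidean metric, let W_{abcd} be the tensor field whose only nonvanishing components are those determined from W_{1234} = W_{1324} = sin(x₅) by the symmetries W_{abcd} = −W_{bacd} = −W_{abdc} = W_{cdab}. Then W is a Weyl candidate (it satisfies W_{abcd} = W_{[ab]cd} = W_{ab[cd]}, W_{abcd} = W_{cdab}, W_{a[bcd]} = 0 and W^a_{bad} = 0), but it fails constraint (10): the (a,b;c,d;e) = (1,2;3,4;5) component of the left-hand side of (10) is a nonzero constant multiple of cos(x₅), which is not identically zero. -/

import Mathlib

open scoped ContDiff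

noncomputable section

/-- Partial derivative `∂ᵢ f` of a scalar field on flat `ℝⁿ` (points represented as
`Fin n → ℝ`, standard coordinates) in the `i`-th coordinate direction.  In Cartesian
coordinates on flat space this is the covariant derivative `;i`. -/
def pd {n : ℕ} (i : Fin n) (f : (Fin n → ℝ) → ℝ) : (Fin n → ℝ) → ℝ :=
  fun x => fderiv ℝ f x (Pi.single i 1)

/-- Components `η_{ab}` of the constant diagonal metric with diagonal entries `η a = ±1`;
since the entries are `±1` these coincide with the components `η^{ab}` of the inverse
metric. -/
def gm {n : ℕ} (η : Fin n → ℝ) (a b : Fin n) : ℝ := if a = b then η a else 0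

/-- Antisymmetrization over two index slots. -/
def asym2 {n : ℕ} (T : Fin n → Fin n → ℝ) (a b : Fin n) : ℝ := (T a b - T b a) / 2

/-- Antisymmetrization over three index slots. -/
def asym3 {n : ℕ} (T : Fin n → Fin n → Fin n → ℝ) (a b c : Fin n) : ℝ :=
  (T a b c - T a c b - T b a c + T b c a + T c a b - T c b a) / 6

/-- Simultaneous antisymmetrization over a pair of upper slots and a pair of lower slots. -/
def asym22 {n : ℕ} (T : Fin n → Fin n → Fin n → Fin n → ℝ) (a b c d : Fin n) : ℝ :=
  (T a b c d - T b a c d - T a b d c + T b a d c) / 4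

/-- Simultaneous antisymmetrization over a triple of upper slots and a triple of lower
slots (arguments ordered as `T upper₁ upper₂ upper₃ lower₁ lower₂ lower₃`). -/
def asym33 {n : ℕ} (T : Fin n → Fin n → Fin n → Fin n → Fin n → Fin n → ℝ)
    (a b f c d e : Fin n) : ℝ :=
  asym3 (fun a b f => asym3 (fun c d e => T a b f c d e) c d e) a b f

/-- A Weyl candidate: a 4-tensor field with the index symmetries (3a)–(3d):
antisymmetry in the first and in the second index pair, symmetry under interchange of the
two pairs, vanishing cyclic sum `W_{a[bcd]} = 0`, and vanishing trace `W^a{}_{bad} = 0`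
(the trace being taken with the metric `η`). -/
def WeylCandidate {n : ℕ} (η : Fin n → ℝ)
    (W : (Fin n → ℝ) → Fin n → Fin n → Fin n → Fin n → ℝ) : Prop :=
  (∀ x a b c d, W x a b c d = - W x b a c d) ∧
  (∀ x a b c d, W x a b c d = - W x a b d c) ∧
  (∀ x a b c d, W x a b c d = W x c d a b) ∧
  (∀ x a b c d, asym3 (fun b c d => W x a b c d) b c d = 0) ∧
  (∀ x b d, ∑ a, η a * W x a b a d = 0)

/-- The right-hand side of the Lanczos potential equation (4), in the equivalent fully
lowered form (the free indices `a b`, raised in the paper, are lowered with the invertible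
diagonal metric `η`, which only multiplies each component equation by `η a * η b ≠ 0`).
Each contracted (dummy) index pair carries a factor `η i` coming from the inverse
metric. -/
def rhs4 {n : ℕ} (η : Fin n → ℝ) (L : (Fin n → ℝ) → Fin n → Fin n → Fin n → ℝ)
    (x : Fin n → ℝ) (a b c d : Fin n) : ℝ :=
  -- 2 L^{ab}{}_{[c;d]}
  (pd d (L · a b c) x - pd c (L · a b d) x)
  -- + 2 L_{cd}{}^{[a;b]}
  + (pd b (L · c d a) x - pd a (L · c d b) x)
  -- − (4/(n−2)) δ^{[a}_{[c} ( L^{b]i}{}_{d];i} − L^{b]i}{}_{|i|;d]} + L_{d]i}{}^{b];i} − L_{d]i}{}^{|i|;b]} )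
  - (4 / ((n : ℝ) - 2)) *
      asym22 (fun a b c d =>
        gm η a c *
          ∑ i, η i *
            (pd i (L · b i d) x - pd d (L · b i i) x
              + pd i (L · d i b) x - pd b (L · d i i) x)) a b c d
  -- + (8/((n−2)(n−1))) δ^{a}_{[c} δ^{b}_{d]} L^{ij}{}_{i;j}
  + (8 / (((n : ℝ) - 2) * ((n : ℝ) - 1))) *
      ((gm η a c * gm η b d - gm η a d * gm η b c) / 2) *
      ∑ i, ∑ j, η i * η j * pd j (L · i j i) x

/-- Equation (4): `L` is a Lanczos potential for `W` (fully lowered, equivalent form). -/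
def Eq4 {n : ℕ} (η : Fin n → ℝ)
    (W : (Fin n → ℝ) → Fin n → Fin n → Fin n → Fin n → ℝ)
    (L : (Fin n → ℝ) → Fin n → Fin n → Fin n → ℝ) : Prop :=
  ∀ x a b c d, W x a b c d = rhs4 η L x a b c d

/-- The right-hand side of equation (5) (equation (4) in the Lanczos algebraic gauge
`L_{ab}{}^b = 0`), fully lowered form:
`2 L^{ab}{}_{[c;d]} + 2 L_{cd}{}^{[a;b]} − (4/(n−2)) δ^{[a}_{[c} ( L^{b]i}{}_{d];i} + L_{d]i}{}^{b];i} )`. -/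
def rhs5 {n : ℕ} (η : Fin n → ℝ) (L : (Fin n → ℝ) → Fin n → Fin n → Fin n → ℝ)
    (x : Fin n → ℝ) (a b c d : Fin n) : ℝ :=
  (pd d (L · a b c) x - pd c (L · a b d) x)
  + (pd b (L · c d a) x - pd a (L · c d b) x)
  - (4 / ((n : ℝ) - 2)) *
      asym22 (fun a b c d =>
        gm η a c * ∑ i, η i * (pd i (L · b i d) x + pd i (L · d i b) x)) a b c d

/-- Equation (5). -/
def Eq5 {n : ℕ} (η : Fin n → ℝ)
    (W : (Fin n → ℝ) → Fin n → Fin n → Fin n → Fin n → ℝ)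
    (L : (Fin n → ℝ) → Fin n → Fin n → Fin n → ℝ) : Prop :=
  ∀ x a b c d, W x a b c d = rhs5 η L x a b c d

/-- Constraint (8), fully lowered form:
`W^{[ab}{}_{[cd;e]}{}^{f]} = (1/(n−4)) δ^{[a}_{[c} W^{bf]}{}_{de];i}{}^{i}
 + (2/(n−4)) δ^{[a}_{[c} W^{|i|b}{}_{de];i}{}^{f]} + (2/(n−4)) δ^{[a}_{[c} W^{bf]}{}_{|i|d;e]}{}^{i}
 + (4/((n−3)(n−4))) δ^{[a}_{[c} δ^{b}_{d} W^{f]i}{}_{e]j;i}{}^{j}`. -/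
def Constraint8 {n : ℕ} (η : Fin n → ℝ)
    (W : (Fin n → ℝ) → Fin n → Fin n → Fin n → Fin n → ℝ) : Prop :=
  ∀ x a b f c d e,
    asym33 (fun a b f c d e => pd f (pd e (W · a b c d)) x) a b f c d e =
      (1 / ((n : ℝ) - 4)) *
          asym33 (fun a b f c d e =>
            gm η a c * ∑ i, η i * pd i (pd i (W · b f d e)) x) a b f c d e
      + (2 / ((n : ℝ) - 4)) *
          asym33 (fun a b f c d e =>
            gm η a c * ∑ i, η i * pd f (pd i (W · i b d e)) x) a b f c d e
      + (2 / ((n : ℝ) - 4)) *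
          asym33 (fun a b f c d e =>
            gm η a c * ∑ i, η i * pd i (pd e (W · b f i d)) x) a b f c d e
      + (4 / (((n : ℝ) - 3) * ((n : ℝ) - 4))) *
          asym33 (fun a b f c d e =>
            gm η a c * gm η b d *
              ∑ i, ∑ j, η i * η j * pd j (pd i (W · f i e j)) x) a b f c d e

/-- Constraint (10), fully lowered form:
`W^{[ab}{}_{cd;i}{}^{|i|e]} + 2 W^{[ab}{}_{i[c;d]}{}^{|i|e]}
 + (4/(n−3)) δ^{[a}_{[c} W^{b|i}{}_{d]j;i}{}^{j|e]} = 0`,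
antisymmetrized over the upper indices `a b e` and (where indicated) the lower indices
`c d`. -/
def Constraint10 {n : ℕ} (η : Fin n → ℝ)
    (W : (Fin n → ℝ) → Fin n → Fin n → Fin n → Fin n → ℝ) : Prop :=
  ∀ x a b e c d,
    asym3 (fun a b e =>
      (∑ i, η i * pd e (pd i (pd i (W · a b c d))) x)
      + 2 * asym2 (fun c d =>
            ∑ i, η i * pd e (pd i (pd d (W · a b i c))) x) c d
      + (4 / ((n : ℝ) - 3)) * asym2 (fun c d =>
            gm η a c *
              ∑ i, ∑ j, η i * η j * pd e (pd j (pd i (W · b i d j))) x) c d) a b e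
    = 0

/-- `pairA p q a b` equals `1` if `(a,b) = (p,q)`, `-1` if `(a,b) = (q,p)` and `0`
otherwise: the components of the antisymmetric "unit bivector" on the index pair
`{p,q}`. -/
def pairA {n : ℕ} (p q a b : Fin n) : ℝ :=
  if a = p ∧ b = q then 1 else if a = q ∧ b = p then -1 else 0

/-- The explicit five-dimensional counterexample (coordinates and indices `1,…,5` of the
paper are `0,…,4` here): the only nonvanishing components are determined from
`W_{1234} = W_{1324} = sin x₅` by the symmetries
`W_{abcd} = −W_{bacd} = −W_{abdc} = W_{cdab}`. -/
def W5 (x : Fin 5 → ℝ) (a b c d : Fin 5) : ℝ :=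
  Real.sin (x 4) *
    (pairA 0 1 a b * pairA 2 3 c d + pairA 2 3 a b * pairA 0 1 c d
      + pairA 0 2 a b * pairA 1 3 c d + pairA 1 3 a b * pairA 0 2 c d)

/-- The Euclidean metric on `ℝ⁵`. -/
def η5 : Fin 5 → ℝ := fun _ => 1

/-- The `(a,b;c,d;e)` component of the left-hand side of constraint (10) for `n = 5`
(coefficient `4/(n−3) = 2`), for the tensor field `W5`. -/
def lhs10 (x : Fin 5 → ℝ) (a b e c d : Fin 5) : ℝ :=
  asym3 (fun a b e =>
    (∑ i, η5 i * pd e (pd i (pd i (W5 · a b c d))) x)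
    + 2 * asym2 (fun c d =>
          ∑ i, η5 i * pd e (pd i (pd d (W5 · a b i c))) x) c d
    + 2 * asym2 (fun c d =>
          gm η5 a c *
            ∑ i, ∑ j, η5 i * η5 j * pd e (pd j (pd i (W5 · b i d j))) x) c d) a b e

/-! ### Auxiliary material for the proof -/

/-- The constant coefficient tensor of `W5`. -/
def K5 (a b c d : Fin 5) : ℝ :=
  pairA 0 1 a b * pairA 2 3 c d + pairA 2 3 a b * pairA 0 1 c d
      + pairA 0 2 a b * pairA 1 3 c d + pairA 1 3 a b * pairA 0 2 c d

/-- Integer version of `pairA`. -/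
def pz (p q a b : Fin 5) : ℤ := if a = p ∧ b = q then 1 else if a = q ∧ b = p then -1 else 0

/-- Integer version of `K5`. -/
def Kz (a b c d : Fin 5) : ℤ :=
  pz 0 1 a b * pz 2 3 c d + pz 2 3 a b * pz 0 1 c d
      + pz 0 2 a b * pz 1 3 c d + pz 1 3 a b * pz 0 2 c d

lemma pz_cast (p q a b : Fin 5) : pairA p q a b = ((pz p q a b : ℤ) : ℝ) := by
  unfold pz pairA; split_ifs <;> norm_num

lemma K5_cast (a b c d : Fin 5) : K5 a b c d = ((Kz a b c d : ℤ) : ℝ) := by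
  unfold Kz K5; push_cast [pz_cast]; ring

lemma hasF_sin (x : Fin 5 → ℝ) :
    HasFDerivAt (fun x : Fin 5 → ℝ => Real.sin (x 4))
      (Real.cos (x 4) • (ContinuousLinearMap.proj 4 : (Fin 5 → ℝ) →L[ℝ] ℝ)) x :=
  (Real.hasDerivAt_sin (x 4)).comp_hasFDerivAt
    (f := ((ContinuousLinearMap.proj 4 : (Fin 5 → ℝ) →L[ℝ] ℝ) : (Fin 5 → ℝ) → ℝ)) x
    ((ContinuousLinearMap.proj 4 : (Fin 5 → ℝ) →L[ℝ] ℝ)).hasFDerivAt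

lemma hasF_cos (x : Fin 5 → ℝ) :
    HasFDerivAt (fun x : Fin 5 → ℝ => Real.cos (x 4))
      ((-Real.sin (x 4)) • (ContinuousLinearMap.proj 4 : (Fin 5 → ℝ) →L[ℝ] ℝ)) x :=
  (Real.hasDerivAt_cos (x 4)).comp_hasFDerivAt
    (f := ((ContinuousLinearMap.proj 4 : (Fin 5 → ℝ) →L[ℝ] ℝ) : (Fin 5 → ℝ) → ℝ)) x
    ((ContinuousLinearMap.proj 4 : (Fin 5 → ℝ) →L[ℝ] ℝ)).hasFDerivAt

lemma pd1 (i : Fin 5) (k : ℝ) :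
    pd i (fun x : Fin 5 → ℝ => Real.sin (x 4) * k)
      = fun x => if i = 4 then Real.cos (x 4) * k else 0 := by
  funext x
  have h := ((hasF_sin x).mul_const k).fderiv
  simp only [pd, h]
  simp [ContinuousLinearMap.proj, Pi.single_apply]
  rcases eq_or_ne i 4 with hi | hi
  · simp [hi, mul_comm]
  · simp [hi, hi.symm]

lemma pd2 (j i : Fin 5) (k : ℝ) :
    pd j (fun x : Fin 5 → ℝ => if i = (4:Fin 5) then Real.cos (x 4) * k else 0)
      = fun x => if i = 4 ∧ j = 4 then -(Real.sin (x 4)) * k else 0 := by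
  by_cases hi : i = (4:Fin 5)
  · funext x
    have h := ((hasF_cos x).mul_const k).fderiv
    simp only [pd, hi, if_true, h]
    simp [ContinuousLinearMap.proj, Pi.single_apply, hi]
    rcases eq_or_ne j 4 with hj | hj
    · simp [hj]; ring
    · simp [hj, hj.symm]
  · funext x
    simp only [pd, hi, if_false]
    simp [hi]

lemma pd3 (e j i : Fin 5) (k : ℝ) (x : Fin 5 → ℝ) :
    pd e (fun x : Fin 5 → ℝ =>
        if i = (4:Fin 5) ∧ j = (4:Fin 5) then -(Real.sin (x 4)) * k else 0) x
      = if i = 4 ∧ j = 4 ∧ e = 4 then -(Real.cos (x 4)) * k else 0 := by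
  by_cases hij : i = (4:Fin 5) ∧ j = (4:Fin 5)
  · have h := ((hasF_sin x).mul_const (-k)).fderiv
    have heq : (fun x : Fin 5 → ℝ =>
        if i = (4:Fin 5) ∧ j = (4:Fin 5) then -(Real.sin (x 4)) * k else 0)
        = fun x => Real.sin (x 4) * (-k) := by
      funext y; rw [if_pos hij]; ring
    rw [heq]
    simp only [pd, h]
    simp [ContinuousLinearMap.proj, Pi.single_apply, hij]
    rcases eq_or_ne e 4 with he | he
    · simp [he]; ring
    · simp [he, he.symm]
  · simp only [pd, hij, if_false]
    rw [if_neg (by tauto)]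
    simp

lemma W5_eq (a b c d : Fin 5) :
    (W5 · a b c d) = fun x => Real.sin (x 4) * K5 a b c d := rfl

lemma pdW (e j i a b c d : Fin 5) (x : Fin 5 → ℝ) :
    pd e (pd j (pd i (W5 · a b c d))) x
      = if i = 4 ∧ j = 4 ∧ e = 4 then -(Real.cos (x 4)) * K5 a b c d else 0 := by
  rw [W5_eq, pd1, pd2, pd3]

lemma W5_K5 (x : Fin 5 → ℝ) (a b c d : Fin 5) :
    W5 x a b c d = Real.sin (x 4) * K5 a b c d := rfl

/-- **Explicit five-dimensional counterexample.**  On Euclidean `ℝ⁵` the tensor field `W5`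
is a Weyl candidate, but the `(a,b;c,d;e) = (1,2;3,4;5)` component of the left-hand side
of constraint (10) is a nonzero constant multiple of `cos x₅`, hence not identically
zero; so `W5` fails constraint (10). -/

theorem five_dimensional_counterexample :
    WeylCandidate η5 W5 ∧
    (∃ c : ℝ, c ≠ 0 ∧ ∀ x, lhs10 x 0 1 4 2 3 = c * Real.cos (x 4)) ∧
    (∃ x, lhs10 x 0 1 4 2 3 ≠ 0) := by
  have hmain : ∀ x, lhs10 x 0 1 4 2 3 = (-1/3 : ℝ) * Real.cos (x 4) := by
    intro x
    simp only [lhs10, asym3, asym2, η5, gm, one_mul]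
    simp only [pdW]
    simp only [Fin.sum_univ_five]
    simp only [Fin.reduceEq, reduceIte, and_self, and_true, true_and, and_false, false_and,
      if_true, if_false, mul_zero, zero_mul, add_zero, zero_add, neg_zero, sub_zero, zero_sub,
      mul_one, one_mul]
    simp only [K5, pairA, Fin.reduceEq, and_self, and_true, true_and, and_false, false_and,
      if_true, if_false, reduceIte]
    ring
  refine ⟨?_, ⟨-1/3, by norm_num, hmain⟩, ⟨fun _ => 0, ?_⟩⟩
  · have h1 : ∀ a b c d : Fin 5, Kz a b c d = -Kz b a c d := by decide
    have h2 : ∀ a b c d : Fin 5, Kz a b c d = -Kz a b d c := by decide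
    have h3 : ∀ a b c d : Fin 5, Kz a b c d = Kz c d a b := by decide
    have h4 : ∀ a b c d : Fin 5,
        Kz a b c d - Kz a b d c - Kz a c b d + Kz a c d b + Kz a d b c - Kz a d c b = 0 := by
      decide
    have h5 : ∀ b d : Fin 5, ∑ a, Kz a b a d = 0 := by decide
    refine ⟨fun x a b c d => ?_, fun x a b c d => ?_, fun x a b c d => ?_,
      fun x a b c d => ?_, fun x b d => ?_⟩
    · simp only [W5_K5, K5_cast]
      have := h1 a b c d; push_cast [this]; ring
    · simp only [W5_K5, K5_cast]
      have := h2 a b c d; push_cast [this]; ring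
    · simp only [W5_K5, K5_cast]
      have := h3 a b c d; push_cast [this]; ring
    · simp only [asym3, W5_K5, K5_cast]
      have := h4 a b c d
      have h' : ((Kz a b c d : ℤ) : ℝ) - Kz a b d c - Kz a c b d + Kz a c d b
          + Kz a d b c - Kz a d c b = 0 := by exact_mod_cast this
      linear_combination (Real.sin (x 4) / 6) * h'
    · simp only [η5, one_mul, W5_K5, K5_cast, ← Finset.mul_sum]
      have h' : ∑ a, ((Kz a b a d : ℤ) : ℝ) = 0 := by exact_mod_cast h5 b d
      rw [h', mul_zero]
  · rw [hmain]
    norm_num
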